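/- Let g:[0,1]→ℝ be concave with g(0) = lim_{x→0⁺} g(x) = 0, and suppose g is subderivative, i.e. g(xy) ≤ x·g(y) + y·g(x) for all x,y ∈ [0,1]. Then limsup_{x→0⁺} g(x)/η(x) < ∞, where η(x) = −x log₂ x. -/

import Mathlib

open Filter Set

/-- The Shannon function `η(x) = −x·log₂ x`. -/
noncomputable def shannonF : ℝ → ℝ := fun x => -(x * Real.logb 2 x)

/-- If an entropy function `g` is subderivative, i.e. `g(xy) ≤ x·g(y) + y·g(x)` for all
`x, y ∈ [0,1]`, then `limsup_{x→0⁺} g(x)/η(x) < ∞`, i.e. `g(x)/η(x)` is bounded above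
near `0⁺`. -/
theorem statement18 (g : ℝ → ℝ) (hconc : ConcaveOn ℝ (Set.Icc 0 1) g) (hg0 : g 0 = 0)
    (hg0' : Tendsto g (nhdsWithin 0 (Set.Ioi 0)) (nhds 0))
    (hsub : ∀ x ∈ Set.Icc (0 : ℝ) 1, ∀ y ∈ Set.Icc (0 : ℝ) 1,
      g (x * y) ≤ x * g y + y * g x) :
    ∃ C : ℝ, ∀ᶠ x in nhdsWithin 0 (Set.Ioi (0 : ℝ)), g x / shannonF x ≤ C := by
  set c := g (1/2) with hc
  have hg1 : 0 ≤ g 1 := by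
    have := hsub 1 (by norm_num) 1 (by norm_num)
    norm_num at this
    linarith
  have hgnn : ∀ x ∈ Set.Icc (0:ℝ) 1, 0 ≤ g x := by
    intro x hx
    have h := hconc.2 (show (0:ℝ) ∈ Set.Icc (0:ℝ) 1 by norm_num)
      (show (1:ℝ) ∈ Set.Icc (0:ℝ) 1 by norm_num)
      (show (0:ℝ) ≤ 1-x by linarith [hx.2]) (show (0:ℝ) ≤ x from hx.1) (by ring)
    simp only [smul_eq_mul, mul_zero, mul_one, zero_add, hg0] at h
    nlinarith [hx.1]
  have hratio : ∀ t x : ℝ, 0 < t → t ≤ x → x ≤ 1 → t * g x ≤ x * g t := by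
    intro t x ht htx hx1
    have hx0 : 0 < x := lt_of_lt_of_le ht htx
    have h := hconc.2 (show (0:ℝ) ∈ Set.Icc (0:ℝ) 1 by norm_num)
      (show x ∈ Set.Icc (0:ℝ) 1 from ⟨le_of_lt hx0, hx1⟩)
      (show (0:ℝ) ≤ 1 - t/x by rw [sub_nonneg, div_le_one hx0]; exact htx)
      (show (0:ℝ) ≤ t/x by positivity) (by ring)
    have hxx : (1 - t/x) • (0:ℝ) + (t/x) • x = t := by
      rw [smul_eq_mul, smul_eq_mul, mul_zero, zero_add, div_mul_cancel₀ t hx0.ne']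
    rw [hxx] at h
    simp only [smul_eq_mul, hg0, mul_zero, zero_add] at h
    rw [div_mul_eq_mul_div, div_le_iff₀ hx0] at h
    linarith
  have hc0 : 0 ≤ c := hgnn (1/2) (by norm_num)
  have hdyadic : ∀ n : ℕ, g ((1/2)^n) ≤ (1/2)^n * (g 1 + 2*c*n) := by
    intro n
    induction n with
    | zero => simp
    | succ n ih =>
      have h := hsub (1/2) (by norm_num) ((1/2)^n)
        ⟨by positivity, pow_le_one₀ (by norm_num) (by norm_num)⟩
      rw [show ((1:ℝ)/2)^(n+1) = (1/2)*(1/2)^n by ring]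
      push_cast
      linarith
  refine ⟨g 1 + 4*c, ?_⟩
  have hmem : Set.Ioo (0:ℝ) (1/2) ∈ nhdsWithin 0 (Set.Ioi 0) :=
    Ioo_mem_nhdsGT_of_mem (by norm_num)
  filter_upwards [hmem] with x hx
  obtain ⟨hx0, hx2⟩ := hx
  have hx1 : x ≤ 1 := by linarith
  have hxi : (2:ℝ) ≤ x⁻¹ := by
    rw [le_inv_comm₀ (by norm_num) hx0]; linarith
  have hxi0 : (0:ℝ) < x⁻¹ := by positivity
  have hL1 : 1 ≤ Real.logb 2 x⁻¹ := by
    calc (1:ℝ) = Real.logb 2 2 := (Real.logb_self_eq_one (by norm_num)).symm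
    _ ≤ Real.logb 2 x⁻¹ := Real.logb_le_logb_of_le (by norm_num) (by norm_num) hxi
  set n := ⌊Real.logb 2 x⁻¹⌋₊ with hn
  have hn1 : 1 ≤ n := Nat.le_floor (by exact_mod_cast hL1)
  have hle : (n:ℝ) ≤ Real.logb 2 x⁻¹ := Nat.floor_le (by linarith)
  have hlt : Real.logb 2 x⁻¹ < n + 1 := Nat.lt_floor_add_one _
  have hxinv : x⁻¹ < (2:ℝ)^(n+1) := by
    have := (Real.logb_lt_iff_lt_rpow (by norm_num) hxi0).mp hlt
    rwa [show ((n:ℝ)+1) = ((n+1 : ℕ):ℝ) by push_cast; ring, Real.rpow_natCast] at this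
  have htx : ((1:ℝ)/2)^(n+1) ≤ x := by
    rw [div_pow, one_pow, div_le_iff₀ (by positivity)]
    calc (1:ℝ) = x * x⁻¹ := (mul_inv_cancel₀ hx0.ne').symm
    _ ≤ x * 2^(n+1) := by nlinarith
  have ht : (0:ℝ) < (1/2:ℝ)^(n+1) := by positivity
  -- g x ≤ x * (g 1 + 2 c (n+1))
  have gbound : g x ≤ x * (g 1 + 2*c*(n+1)) := by
    have h1 := hratio ((1/2)^(n+1)) x ht htx hx1
    have h2 := hdyadic (n+1)
    have h3 : x * g ((1/2)^(n+1)) ≤ x * ((1/2)^(n+1) * (g 1 + 2*c*(n+1))) := by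
      apply mul_le_mul_of_nonneg_left _ (le_of_lt hx0)
      exact_mod_cast h2
    have h4 : (1/2:ℝ)^(n+1) * g x ≤ (1/2)^(n+1) * (x * (g 1 + 2*c*(n+1))) := by
      calc (1/2:ℝ)^(n+1) * g x ≤ x * ((1/2)^(n+1) * (g 1 + 2*c*(n+1))) := le_trans h1 h3
      _ = (1/2)^(n+1) * (x * (g 1 + 2*c*(n+1))) := by ring
    exact le_of_mul_le_mul_left h4 ht
  have hsF : shannonF x = x * Real.logb 2 x⁻¹ := by
    simp [shannonF, Real.logb_inv]
  have hsFpos : 0 < shannonF x := by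
    rw [hsF]; positivity
  rw [div_le_iff₀ hsFpos, hsF]
  have hn1' : (1:ℝ) ≤ (n:ℝ) := by exact_mod_cast hn1
  have e1 : 0 ≤ x*((n:ℝ)-1)*g 1 := mul_nonneg (mul_nonneg hx0.le (by linarith)) hg1
  have e2 : 0 ≤ x*((n:ℝ)-1)*c := mul_nonneg (mul_nonneg hx0.le (by linarith)) hc0
  have hint := mul_le_mul_of_nonneg_left hle (show 0 ≤ x*(g 1 + 4*c) by positivity)
  nlinarith [hint, e1, e2, gbound]
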